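/- Let i ≥ 2 and let T be a cyclic S_i-module (generated by one element) that is totally reflexive, nonzero, and not free. Then there exist b_1, …, b_i ∈ k such that T is isomorphic as an S_i-module to S_i/(x + b_1·y_1 + ⋯ + b_i·y_i); in particular, every nontrivial cyclic totally reflexive S_i-module arises as the quotient of S_i by a principal ideal generated by an exact zerodivisor. -/

import Mathlib

set_option synthInstance.maxHeartbeats 1000000
set_option maxHeartbeats 1000000

open MvPolynomial

noncomputable section

/-- The defining ideal `(X², (Y₁,…,Y_i)²)` of `S_i` in `k[X,Y₁,…,Y_i]`;
the variable `X 0` plays the role of `X` and `X j.succ` the role of `Y_j`. -/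
abbrev SIdeal (k : Type) [Field k] (i : ℕ) : Ideal (MvPolynomial (Fin (i + 1)) k) :=
  Ideal.span ({X 0 ^ 2} ∪ {p | ∃ a b : Fin i, p = X a.succ * X b.succ})

/-- `S_i = k[X,Y₁,…,Y_i]/(X², (Y₁,…,Y_i)²)`. -/
abbrev Sring (k : Type) [Field k] (i : ℕ) := MvPolynomial (Fin (i + 1)) k ⧸ SIdeal k i

/-- `x`, the residue class of `X` in `S_i`. -/
abbrev xS (k : Type) [Field k] (i : ℕ) : Sring k i := Ideal.Quotient.mk _ (X 0)

/-- `y_j`, the residue class of `Y_j` in `S_i`. -/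
abbrev yS (k : Type) [Field k] (i : ℕ) (j : Fin i) : Sring k i :=
  Ideal.Quotient.mk _ (X j.succ)

/-- The maximal ideal `𝔫_i = (x, y₁, …, y_i)` of `S_i`. -/
abbrev nS (k : Type) [Field k] (i : ℕ) : Ideal (Sring k i) :=
  Ideal.span ({xS k i} ∪ Set.range (yS k i))

open CategoryTheory in
/-- A module `T` over a commutative ring `R` is totally reflexive if
`Ext^j_R(T, R) = 0` and `Ext^j_R(Hom_R(T,R), R) = 0` for all `j > 0`, and the biduality
map `δ : T → Hom_R(Hom_R(T,R), R)` is an isomorphism. -/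
def IsTotallyReflexive (R : Type) [CommRing R]
    (T : Type) [AddCommGroup T] [Module R T] : Prop :=
  (∀ j : ℕ, 0 < j →
    Subsingleton ((((_root_.Ext R (ModuleCat.{0} R) j).obj
      (Opposite.op (ModuleCat.of R T))).obj (ModuleCat.of R R)) : Type)) ∧
  (∀ j : ℕ, 0 < j →
    Subsingleton ((((_root_.Ext R (ModuleCat.{0} R) j).obj
      (Opposite.op (ModuleCat.of R (Module.Dual R T)))).obj (ModuleCat.of R R)) : Type)) ∧
  Function.Bijective (Module.Dual.eval R T)

/-- Concrete model of `S_i`: `a + b·x + Σ c_j y_j + Σ d_j x y_j`. -/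
@[ext]
structure Mo (k : Type) (i : ℕ) where
  a : k
  b : k
  c : Fin i → k
  d : Fin i → k

namespace Mo

variable {k : Type} [Field k] {i : ℕ}

instance : Zero (Mo k i) := ⟨⟨0, 0, fun _ => 0, fun _ => 0⟩⟩
instance : One (Mo k i) := ⟨⟨1, 0, fun _ => 0, fun _ => 0⟩⟩
instance : Add (Mo k i) :=
  ⟨fun p q => ⟨p.a + q.a, p.b + q.b, fun j => p.c j + q.c j, fun j => p.d j + q.d j⟩⟩
instance : Neg (Mo k i) := ⟨fun p => ⟨-p.a, -p.b, fun j => -p.c j, fun j => -p.d j⟩⟩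
instance : Mul (Mo k i) :=
  ⟨fun p q => ⟨p.a * q.a, p.a * q.b + q.a * p.b,
    fun j => p.a * q.c j + q.a * p.c j,
    fun j => p.a * q.d j + q.a * p.d j + p.b * q.c j + q.b * p.c j⟩⟩

@[simp] lemma zero_a : (0 : Mo k i).a = 0 := rfl
@[simp] lemma zero_b : (0 : Mo k i).b = 0 := rfl
@[simp] lemma zero_c (j : Fin i) : (0 : Mo k i).c j = 0 := rfl
@[simp] lemma zero_d (j : Fin i) : (0 : Mo k i).d j = 0 := rfl
@[simp] lemma one_a : (1 : Mo k i).a = 1 := rfl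
@[simp] lemma one_b : (1 : Mo k i).b = 0 := rfl
@[simp] lemma one_c (j : Fin i) : (1 : Mo k i).c j = 0 := rfl
@[simp] lemma one_d (j : Fin i) : (1 : Mo k i).d j = 0 := rfl
@[simp] lemma add_a (p q : Mo k i) : (p + q).a = p.a + q.a := rfl
@[simp] lemma add_b (p q : Mo k i) : (p + q).b = p.b + q.b := rfl
@[simp] lemma add_c (p q : Mo k i) (j : Fin i) : (p + q).c j = p.c j + q.c j := rfl
@[simp] lemma add_d (p q : Mo k i) (j : Fin i) : (p + q).d j = p.d j + q.d j := rfl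
@[simp] lemma neg_a (p : Mo k i) : (-p).a = -p.a := rfl
@[simp] lemma neg_b (p : Mo k i) : (-p).b = -p.b := rfl
@[simp] lemma neg_c (p : Mo k i) (j : Fin i) : (-p).c j = -p.c j := rfl
@[simp] lemma neg_d (p : Mo k i) (j : Fin i) : (-p).d j = -p.d j := rfl
@[simp] lemma mul_a (p q : Mo k i) : (p * q).a = p.a * q.a := rfl
@[simp] lemma mul_b (p q : Mo k i) : (p * q).b = p.a * q.b + q.a * p.b := rfl
@[simp] lemma mul_c (p q : Mo k i) (j : Fin i) : (p * q).c j = p.a * q.c j + q.a * p.c j := rfl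
@[simp] lemma mul_d (p q : Mo k i) (j : Fin i) :
    (p * q).d j = p.a * q.d j + q.a * p.d j + p.b * q.c j + q.b * p.c j := rfl

lemma ext' {p q : Mo k i} (ha : p.a = q.a) (hb : p.b = q.b)
    (hc : ∀ j, p.c j = q.c j) (hd : ∀ j, p.d j = q.d j) : p = q := by
  cases p; cases q; simp_all [funext_iff]

instance : CommRing (Mo k i) where
  add := (· + ·)
  add_assoc p q r := ext' (by simp [add_assoc]) (by simp [add_assoc])
    (fun j => by simp [add_assoc]) (fun j => by simp [add_assoc])
  zero := 0
  zero_add p := ext' (by simp) (by simp) (fun j => by simp) (fun j => by simp)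
  add_zero p := ext' (by simp) (by simp) (fun j => by simp) (fun j => by simp)
  add_comm p q := ext' (by simp [add_comm]) (by simp [add_comm])
    (fun j => by simp [add_comm]) (fun j => by simp [add_comm])
  nsmul := nsmulRec
  zsmul := zsmulRec
  neg := Neg.neg
  neg_add_cancel p := ext' (by simp) (by simp) (fun j => by simp) (fun j => by simp)
  mul := (· * ·)
  mul_assoc p q r := ext' (by simp; ring) (by simp; ring)
    (fun j => by simp; ring) (fun j => by simp; ring)
  one := 1
  one_mul p := ext' (by simp) (by simp) (fun j => by simp) (fun j => by simp)
  mul_one p := ext' (by simp) (by simp) (fun j => by simp) (fun j => by simp)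
  left_distrib p q r := ext' (by simp; ring) (by simp; ring)
    (fun j => by simp; ring) (fun j => by simp; ring)
  right_distrib p q r := ext' (by simp; ring) (by simp; ring)
    (fun j => by simp; ring) (fun j => by simp; ring)
  mul_comm p q := ext' (by simp; ring) (by simp; ring)
    (fun j => by simp; ring) (fun j => by simp; ring)
  zero_mul p := ext' (by simp) (by simp) (fun j => by simp) (fun j => by simp)
  mul_zero p := ext' (by simp) (by simp) (fun j => by simp) (fun j => by simp)

/-- `k → Mo k i` as a ring hom. -/
def algMap : k →+* Mo k i where
  toFun r := ⟨r, 0, fun _ => 0, fun _ => 0⟩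
  map_one' := ext' rfl rfl (fun _ => rfl) (fun _ => rfl)
  map_mul' r s := ext' (by simp) (by simp) (fun j => by simp) (fun j => by simp)
  map_zero' := rfl
  map_add' r s := ext' (by simp) (by simp) (fun j => by simp) (fun j => by simp)

instance : Algebra k (Mo k i) := (algMap (k := k) (i := i)).toAlgebra

@[simp] lemma algebraMap_apply (r : k) :
    algebraMap k (Mo k i) r = ⟨r, 0, fun _ => 0, fun _ => 0⟩ :=
  Mo.ext' rfl rfl (fun _ => rfl) (fun _ => rfl)

end Mo

section SringLemmas
variable (k : Type) [Field k] (i : ℕ)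

lemma hxx : xS k i * xS k i = 0 := by
  rw [← map_mul, Ideal.Quotient.eq_zero_iff_mem]
  exact Ideal.subset_span (Or.inl (by rw [Set.mem_singleton_iff, sq]))

lemma hyy (a b : Fin i) : yS k i a * yS k i b = 0 := by
  rw [← map_mul, Ideal.Quotient.eq_zero_iff_mem]
  exact Ideal.subset_span (Or.inr ⟨a, b, rfl⟩)

lemma algebraMap_Sring (r : k) :
    algebraMap k (Sring k i) r = Ideal.Quotient.mk (SIdeal k i) (C r) := rfl

end SringLemmas
namespace Bridge
variable (k : Type) [Field k] (i : ℕ)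

local notation "R" => Sring k i
local notation "M" => Mo k i
local notation "K" => algebraMap k (Sring k i)
local notation "mkq" => Ideal.Quotient.mk (SIdeal k i)

/-- images of the variables in the model -/
def var : Fin (i + 1) → Mo k i :=
  Fin.cases ⟨0, 1, fun _ => 0, fun _ => 0⟩ (fun j => ⟨0, 0, Pi.single j 1, fun _ => 0⟩)

@[simp] lemma var_zero : var k i 0 = ⟨0, 1, fun _ => 0, fun _ => 0⟩ := rfl
@[simp] lemma var_succ (j : Fin i) :
    var k i j.succ = ⟨0, 0, Pi.single j 1, fun _ => 0⟩ := by
  simp [var]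

/-- the algebra map from the polynomial ring to the model -/
def phi0 : MvPolynomial (Fin (i + 1)) k →ₐ[k] Mo k i := aeval (var k i)

lemma SIdeal_le_ker : SIdeal k i ≤ RingHom.ker (phi0 k i).toRingHom := by
  rw [Ideal.span_le]
  rintro p (hp | ⟨a, b, rfl⟩)
  · rw [Set.mem_singleton_iff] at hp
    subst hp
    simp only [SetLike.mem_coe, RingHom.mem_ker, map_pow, phi0, aeval_X, var_zero, sq]
    exact Mo.ext' (by simp) (by simp) (fun j => by simp) (fun j => by simp)
  · simp only [SetLike.mem_coe, RingHom.mem_ker, map_mul, phi0, aeval_X, var_succ]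
    exact Mo.ext' (by simp) (by simp) (fun j => by simp) (fun j => by simp)

/-- the induced ring hom from `S_i` to the model -/
def phiBar : Sring k i →+* Mo k i :=
  Ideal.Quotient.lift (SIdeal k i) (phi0 k i).toRingHom
    (fun a ha => SIdeal_le_ker k i ha)

@[simp] lemma phiBar_mk (p : MvPolynomial (Fin (i + 1)) k) :
    phiBar k i (mkq p) = phi0 k i p := rfl

@[simp] lemma phiBar_x : phiBar k i (xS k i) = ⟨0, 1, fun _ => 0, fun _ => 0⟩ := by
  simp [phi0]

@[simp] lemma phiBar_y (j : Fin i) :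
    phiBar k i (yS k i j) = ⟨0, 0, Pi.single j 1, fun _ => 0⟩ := by
  simp [phi0]

@[simp] lemma phiBar_K (r : k) :
    phiBar k i (K r) = algebraMap k (Mo k i) r := by
  rw [algebraMap_Sring]
  simp only [phiBar_mk, phi0]
  rw [aeval_C]

/-- inverse map (as a bare function) -/
def psi (m : Mo k i) : Sring k i :=
  K m.a + K m.b * xS k i + (∑ j, K (m.c j) * yS k i j)
    + ∑ j, K (m.d j) * (xS k i * yS k i j)

lemma psi_add (m m' : Mo k i) : psi k i (m + m') = psi k i m + psi k i m' := by
  simp only [psi, Mo.add_a, Mo.add_b, Mo.add_c, Mo.add_d, map_add, add_mul,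
    Finset.sum_add_distrib]
  ring


/-- projections as additive homs, for pushing through sums -/
def aHom : Mo k i →+ k := { toFun := Mo.a, map_zero' := rfl, map_add' := fun _ _ => rfl }
def bHom : Mo k i →+ k := { toFun := Mo.b, map_zero' := rfl, map_add' := fun _ _ => rfl }
def cHom (l : Fin i) : Mo k i →+ k :=
  { toFun := fun m => m.c l, map_zero' := rfl, map_add' := fun _ _ => rfl }
def dHom (l : Fin i) : Mo k i →+ k :=
  { toFun := fun m => m.d l, map_zero' := rfl, map_add' := fun _ _ => rfl }

@[simp] lemma sum_a {α : Type} (s : Finset α) (f : α → Mo k i) :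
    (∑ j ∈ s, f j).a = ∑ j ∈ s, (f j).a := map_sum (aHom k i) f s
@[simp] lemma sum_b {α : Type} (s : Finset α) (f : α → Mo k i) :
    (∑ j ∈ s, f j).b = ∑ j ∈ s, (f j).b := map_sum (bHom k i) f s
@[simp] lemma sum_c {α : Type} (s : Finset α) (f : α → Mo k i) (l : Fin i) :
    (∑ j ∈ s, f j).c l = ∑ j ∈ s, (f j).c l := map_sum (cHom k i l) f s
@[simp] lemma sum_d {α : Type} (s : Finset α) (f : α → Mo k i) (l : Fin i) :
    (∑ j ∈ s, f j).d l = ∑ j ∈ s, (f j).d l := map_sum (dHom k i l) f s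

lemma xyx (j : Fin i) : (xS k i * yS k i j) * xS k i = 0 := by
  rw [mul_comm, ← mul_assoc, hxx, zero_mul]

lemma xyy (j l : Fin i) : (xS k i * yS k i j) * yS k i l = 0 := by
  rw [mul_assoc, hyy, mul_zero]

lemma psi_mul_x (m : Mo k i) :
    psi k i (m * ⟨0, 1, fun _ => 0, fun _ => 0⟩) = psi k i m * xS k i := by
  simp only [psi, Mo.mul_a, Mo.mul_b, Mo.mul_c, Mo.mul_d]
  simp only [mul_zero, zero_mul, mul_one, one_mul, add_zero, zero_add, map_zero,
    Finset.sum_const_zero]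
  rw [add_mul, add_mul, add_mul, Finset.sum_mul, Finset.sum_mul]
  rw [mul_assoc (K m.b), hxx k i, mul_zero]
  have h1 : ∀ j : Fin i, K (m.c j) * yS k i j * xS k i = K (m.c j) * (xS k i * yS k i j) := by
    intro j; rw [mul_assoc, mul_comm (yS k i j)]
  have h2 : ∀ j : Fin i, K (m.d j) * (xS k i * yS k i j) * xS k i = 0 := by
    intro j; rw [mul_assoc, xyx, mul_zero]
  rw [Finset.sum_congr rfl (fun j _ => h1 j), Finset.sum_congr rfl (fun j _ => h2 j)]
  simp

lemma psi_mul_y (m : Mo k i) (l : Fin i) :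
    psi k i (m * ⟨0, 0, Pi.single l 1, fun _ => 0⟩) = psi k i m * yS k i l := by
  simp only [psi, Mo.mul_a, Mo.mul_b, Mo.mul_c, Mo.mul_d]
  simp only [mul_zero, zero_mul, mul_one, one_mul, add_zero, zero_add, map_zero,
    Finset.sum_const_zero]
  have h3 : ∀ j : Fin i, K (m.a * (Pi.single l 1 : Fin i → k) j) * yS k i j
      = if j = l then K m.a * yS k i j else 0 := by
    intro j
    by_cases h : j = l
    · subst h; simp
    · simp [Pi.single_apply, h]
  have h4 : ∀ j : Fin i, K (m.b * (Pi.single l 1 : Fin i → k) j) * (xS k i * yS k i j)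
      = if j = l then K m.b * (xS k i * yS k i j) else 0 := by
    intro j
    by_cases h : j = l
    · subst h; simp
    · simp [Pi.single_apply, h]
  rw [Finset.sum_congr rfl (fun j _ => h3 j), Finset.sum_congr rfl (fun j _ => h4 j)]
  rw [Finset.sum_ite_eq' Finset.univ l, Finset.sum_ite_eq' Finset.univ l]
  simp only [Finset.mem_univ, if_true]
  rw [add_mul, add_mul, add_mul, Finset.sum_mul, Finset.sum_mul]
  have h1 : ∀ j : Fin i, K (m.c j) * yS k i j * yS k i l = 0 := by
    intro j; rw [mul_assoc, hyy, mul_zero]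
  have h2 : ∀ j : Fin i, K (m.d j) * (xS k i * yS k i j) * yS k i l = 0 := by
    intro j; rw [mul_assoc, xyy, mul_zero]
  rw [Finset.sum_congr rfl (fun j _ => h1 j), Finset.sum_congr rfl (fun j _ => h2 j)]
  simp [mul_assoc]

lemma psi_K (r : k) : psi k i (algebraMap k (Mo k i) r) = K r := by
  simp [psi]

lemma psi_phiBar (r : Sring k i) : psi k i (phiBar k i r) = r := by
  obtain ⟨p, rfl⟩ := Ideal.Quotient.mk_surjective (I := SIdeal k i) r
  induction p using MvPolynomial.induction_on with
  | C a =>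
    rw [show mkq (MvPolynomial.C a) = K a from rfl, phiBar_K, psi_K]
  | add p q hp hq =>
    rw [map_add, map_add, psi_add, hp, hq]
  | mul_X p n hp =>
    rw [map_mul, map_mul]
    induction n using Fin.cases with
    | zero =>
      rw [show phiBar k i (mkq (X 0)) = ⟨0, 1, fun _ => 0, fun _ => 0⟩ from phiBar_x k i]
      rw [psi_mul_x, hp]
    | succ l =>
      rw [show phiBar k i (mkq (X l.succ)) = ⟨0, 0, Pi.single l 1, fun _ => 0⟩
        from phiBar_y k i l]
      rw [psi_mul_y, hp]

lemma phiBar_psi (m : Mo k i) : phiBar k i (psi k i m) = m := by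
  simp only [psi, map_add, map_mul, map_sum, phiBar_K, phiBar_x, phiBar_y]
  apply Mo.ext'
  · simp
  · simp
  · intro l
    simp [Pi.single_apply, Finset.sum_ite_eq' Finset.univ l]
  · intro l
    simp [Pi.single_apply, Finset.sum_ite_eq' Finset.univ l]

/-- the ring equivalence between `S_i` and the model -/
def eqv : Sring k i ≃+* Mo k i where
  toFun := phiBar k i
  invFun := psi k i
  left_inv := psi_phiBar k i
  right_inv := phiBar_psi k i
  map_mul' := map_mul (phiBar k i)
  map_add' := map_add (phiBar k i)

@[simp] lemma eqv_apply (r : Sring k i) : eqv k i r = phiBar k i r := rfl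
@[simp] lemma eqv_symm_apply (m : Mo k i) : (eqv k i).symm m = psi k i m := rfl

end Bridge

section DualBridge

variable {A : Type} [CommRing A] (I : Ideal A)

/-- the dual of `A ⧸ I` is the annihilator of `I` -/
def dualEquivAnn : Module.Dual A (A ⧸ I) ≃ₗ[A] I.annihilator where
  toFun φ := ⟨φ (Submodule.Quotient.mk 1), by
    rw [Submodule.mem_annihilator]
    intro u hu
    rw [smul_eq_mul, mul_comm, ← smul_eq_mul, ← map_smul]
    have : (u • Submodule.Quotient.mk 1 : A ⧸ I) = Submodule.Quotient.mk u := by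
      rw [← Submodule.Quotient.mk_smul, smul_eq_mul, mul_one]
    rw [this, (Submodule.Quotient.mk_eq_zero I).2 hu, map_zero]⟩
  map_add' φ ψ := Subtype.ext rfl
  map_smul' r φ := Subtype.ext rfl
  invFun g := Submodule.liftQ I (LinearMap.toSpanSingleton A A g.val) (by
    intro u hu
    rw [LinearMap.mem_ker, LinearMap.toSpanSingleton_apply, smul_eq_mul, mul_comm,
      ← smul_eq_mul]
    exact Submodule.mem_annihilator.1 g.2 u hu)
  left_inv φ := by
    apply LinearMap.ext
    intro q
    obtain ⟨r, rfl⟩ := Submodule.Quotient.mk_surjective I q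
    rw [Submodule.liftQ_apply, LinearMap.toSpanSingleton_apply, ← map_smul]
    congr 1
    rw [← Submodule.Quotient.mk_smul, smul_eq_mul, mul_one]
  right_inv g := by
    apply Subtype.ext
    show (Submodule.liftQ I (LinearMap.toSpanSingleton A A g.val) _)
      (Submodule.Quotient.mk 1) = g.val
    rw [Submodule.liftQ_apply, LinearMap.toSpanSingleton_apply, one_smul]

theorem H1_of_bidual (hbij : Function.Bijective (Module.Dual.eval A (A ⧸ I)))
    (z : A) (hz : ∀ g ∈ I.annihilator, z * g = 0) : z ∈ I := by
  have h0 : Module.Dual.eval A (A ⧸ I) (Submodule.Quotient.mk z) = 0 := by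
    apply LinearMap.ext
    intro φ
    have hφ : φ (Submodule.Quotient.mk 1) ∈ I.annihilator := (dualEquivAnn I φ).2
    have : φ (Submodule.Quotient.mk z) = z * φ (Submodule.Quotient.mk 1) := by
      rw [← smul_eq_mul, ← map_smul]
      congr 1
      rw [← Submodule.Quotient.mk_smul, smul_eq_mul, mul_one]
    simp only [Module.Dual.eval_apply, LinearMap.zero_apply]
    rw [this, hz _ hφ]
  have := hbij.1 (by rw [h0, map_zero] : Module.Dual.eval A (A ⧸ I)
    (Submodule.Quotient.mk z) = Module.Dual.eval A (A ⧸ I) 0)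
  rw [← (Submodule.Quotient.mk_eq_zero I)]
  exact this

theorem H2_of_bidual (hbij : Function.Bijective (Module.Dual.eval A (A ⧸ I)))
    (F : I.annihilator →ₗ[A] A) :
    ∃ t : A, ∀ g (hg : g ∈ I.annihilator), F ⟨g, hg⟩ = t * g := by
  obtain ⟨tq, ht⟩ := hbij.2 (F ∘ₗ (dualEquivAnn I).toLinearMap)
  obtain ⟨t, rfl⟩ := Submodule.Quotient.mk_surjective I tq
  refine ⟨t, fun g hg => ?_⟩
  have h1 : F ⟨g, hg⟩ = (F ∘ₗ (dualEquivAnn I).toLinearMap)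
      ((dualEquivAnn I).symm ⟨g, hg⟩) := by
    simp
  rw [h1, ← ht]
  show ((dualEquivAnn I).symm ⟨g, hg⟩) (Submodule.Quotient.mk t) = t * g
  show (Submodule.liftQ I (LinearMap.toSpanSingleton A A g) _) (Submodule.Quotient.mk t)
    = t * g
  rw [Submodule.liftQ_apply, LinearMap.toSpanSingleton_apply, smul_eq_mul]

end DualBridge

theorem bidual_transfer {A M N : Type} [CommRing A] [AddCommGroup M] [Module A M]
    [AddCommGroup N] [Module A N] (g : M ≃ₗ[A] N)
    (h : Function.Bijective (Module.Dual.eval A N)) :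
    Function.Bijective (Module.Dual.eval A M) := by
  have key : ∀ m : M, g.dualMap.dualMap (Module.Dual.eval A M m)
      = Module.Dual.eval A N (g m) := by
    intro m
    apply LinearMap.ext
    intro ψ
    simp
  have funeq : ⇑(Module.Dual.eval A M)
      = ⇑(g.dualMap.dualMap.symm) ∘ ⇑(Module.Dual.eval A N) ∘ ⇑g := by
    funext m
    simp only [Function.comp_apply, ← key m, LinearEquiv.symm_apply_apply]
  rw [funeq]
  exact (g.dualMap.dualMap.symm.bijective.comp (h.comp g.bijective))

namespace Mo

variable {k : Type} [Field k] {i : ℕ}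

lemma mem_ann {I : Ideal (Mo k i)} {g : Mo k i} :
    g ∈ I.annihilator ↔ ∀ u ∈ I, g * u = 0 := by
  rw [Submodule.mem_annihilator]
  constructor
  · intro h u hu; have := h u hu; rwa [smul_eq_mul] at this
  · intro h u hu; rw [smul_eq_mul]; exact h u hu

lemma isUnit_of_a_ne {z : Mo k i} (h : z.a ≠ 0) : IsUnit z := by
  set u := z.a⁻¹ with hu
  have ha : z.a * u = 1 := mul_inv_cancel₀ h
  refine IsUnit.of_mul_eq_one (a := z)
    ⟨u, -z.b * u ^ 2, fun j => -z.c j * u ^ 2,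
      fun j => 2 * z.b * z.c j * u ^ 3 - z.d j * u ^ 2⟩ ?_
  apply Mo.ext'
  · simpa using ha
  · simp only [Mo.mul_b, Mo.one_b]
    linear_combination (-(z.b * u)) * ha
  · intro j
    simp only [Mo.mul_c, Mo.one_c]
    linear_combination (-(z.c j * u)) * ha
  · intro j
    simp only [Mo.mul_d, Mo.one_d]
    linear_combination (2 * z.b * z.c j * u ^ 2 - z.d j * u) * ha

lemma a_eq_zero {I : Ideal (Mo k i)} (hIT : I ≠ ⊤) {z : Mo k i} (hz : z ∈ I) :
    z.a = 0 := by
  by_contra h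
  exact hIT (Ideal.eq_top_of_isUnit_mem I hz (isUnit_of_a_ne h))

/-- the nonscalar functional trick, `c`-version -/
lemma no_H2_c (h1i : 1 < i) (I : Ideal (Mo k i))
    (hJa : ∀ g ∈ I.annihilator, g.a = 0)
    (hy : (⟨0, 0, Pi.single ⟨0, by omega⟩ 1, fun _ => 0⟩ : Mo k i) ∈ I.annihilator)
    (H2 : ∀ F : I.annihilator →ₗ[Mo k i] Mo k i,
      ∃ t, ∀ g (hg : g ∈ I.annihilator), F ⟨g, hg⟩ = t * g) : False := by
  set j0 : Fin i := ⟨0, by omega⟩ with hj0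
  set j1 : Fin i := ⟨1, h1i⟩ with hj1
  have hne : j1 ≠ j0 := by simp [hj0, hj1, Fin.ext_iff]
  set F : I.annihilator →ₗ[Mo k i] Mo k i :=
    { toFun := fun g =>
        ⟨0, 0, fun _ => 0, fun j => if j = j1 then g.val.c j0 else 0⟩
      map_add' := fun g h => by
        apply Mo.ext' (by simp) (by simp) (fun j => by simp) (fun j => ?_)
        simp only [Submodule.coe_add, Mo.add_c, Mo.add_d]
        split <;> simp
      map_smul' := fun m g => by
        have hma : (m • g).val.c j0 = m.a * g.val.c j0 := by
          have : (m • g).val = m * g.val := rfl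
          rw [this, Mo.mul_c, hJa g.val g.2, zero_mul, add_zero]
        apply Mo.ext' (by simp) (by simp) (fun j => by simp) (fun j => ?_)
        simp only [hma, RingHom.id_apply, Mo.mul_d, Mo.mul_c, Mo.mul_b, Mo.mul_a]
        split <;> rename_i hsp <;> simp [hsp]
      } with hF
  obtain ⟨t, ht⟩ := H2 F
  have h1 := ht _ hy
  have h2 := congrArg (fun z => Mo.d z j1) h1
  simp only [hF] at h2
  simp [Pi.single_apply, hne, hne.symm] at h2

/-- the nonscalar functional trick, `d`-version -/
lemma no_H2_d (h1i : 1 < i) (I : Ideal (Mo k i))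
    (hJ : ∀ g ∈ I.annihilator, g.a = 0 ∧ g.b = 0 ∧ ∀ j, g.c j = 0)
    (hw : (⟨0, 0, fun _ => 0, Pi.single ⟨0, by omega⟩ 1⟩ : Mo k i) ∈ I.annihilator)
    (H2 : ∀ F : I.annihilator →ₗ[Mo k i] Mo k i,
      ∃ t, ∀ g (hg : g ∈ I.annihilator), F ⟨g, hg⟩ = t * g) : False := by
  set j0 : Fin i := ⟨0, by omega⟩ with hj0
  set j1 : Fin i := ⟨1, h1i⟩ with hj1
  have hne : j1 ≠ j0 := by simp [hj0, hj1, Fin.ext_iff]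
  set F : I.annihilator →ₗ[Mo k i] Mo k i :=
    { toFun := fun g =>
        ⟨0, 0, fun _ => 0, fun j => if j = j1 then g.val.d j0 else 0⟩
      map_add' := fun g h => by
        apply Mo.ext' (by simp) (by simp) (fun j => by simp) (fun j => ?_)
        simp only [Submodule.coe_add, Mo.add_c, Mo.add_d]
        split <;> simp
      map_smul' := fun m g => by
        have hma : (m • g).val.d j0 = m.a * g.val.d j0 := by
          have h' : (m • g).val = m * g.val := rfl
          obtain ⟨h1, h2, h3⟩ := hJ g.val g.2
          rw [h', Mo.mul_d, h1, h2, h3, zero_mul, mul_zero, zero_mul, add_zero,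
            add_zero, add_zero]
        apply Mo.ext' (by simp) (by simp) (fun j => by simp) (fun j => ?_)
        simp only [hma, RingHom.id_apply, Mo.mul_d, Mo.mul_c, Mo.mul_b, Mo.mul_a]
        split <;> rename_i hsp <;> simp [hsp]
      } with hF
  obtain ⟨t, ht⟩ := H2 F
  have h1 := ht _ hw
  have h2 := congrArg (fun z => Mo.d z j1) h1
  simp only [hF] at h2
  simp [Pi.single_apply, hne, hne.symm] at h2

theorem classify (h1i : 1 < i) (I : Ideal (Mo k i)) (hI0 : I ≠ ⊥) (hIT : I ≠ ⊤)
    (H2 : ∀ F : I.annihilator →ₗ[Mo k i] Mo k i,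
      ∃ t, ∀ g (hg : g ∈ I.annihilator), F ⟨g, hg⟩ = t * g) :
    ∃ b : Fin i → k, I = Ideal.span {(⟨0, 1, b, fun _ => 0⟩ : Mo k i)} := by
  have ha : ∀ z ∈ I, z.a = 0 := fun z hz => a_eq_zero hIT hz
  by_cases hB : ∃ z ∈ I, z.b ≠ 0
  · -- Case B : some element has a nonzero x-coefficient
    obtain ⟨z0, hz0I, hz0b⟩ := hB
    set z1 : Mo k i := (⟨z0.b⁻¹, 0, fun _ => 0, fun _ => 0⟩ : Mo k i) * z0 with hz1def
    have hz1I : z1 ∈ I := I.mul_mem_left _ hz0I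
    have hz1a : z1.a = 0 := by simp [hz1def, ha z0 hz0I]
    have hz1b : z1.b = 1 := by simp [hz1def, ha z0 hz0I, inv_mul_cancel₀ hz0b]
    -- the whole socle is contained in I
    have hW : ∀ v : Fin i → k, (⟨0, 0, fun _ => 0, v⟩ : Mo k i) ∈ I := by
      intro v
      have hmul : (⟨0, 0, v, fun _ => 0⟩ : Mo k i) * z1 = ⟨0, 0, fun _ => 0, v⟩ :=
        Mo.ext' (by simp) (by simp) (fun j => by simp [hz1a])
          (fun j => by simp [hz1a, hz1b])
      rw [← hmul]
      exact I.mul_mem_left _ hz1I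
    set s : Mo k i := ⟨0, 1, z1.c, fun _ => 0⟩ with hsdef
    have hsI : s ∈ I := by
      have hsub := I.sub_mem hz1I (hW z1.d)
      have : z1 - ⟨0, 0, fun _ => 0, z1.d⟩ = s := by
        rw [sub_eq_add_neg]
        exact Mo.ext' (by simp [hz1a, hsdef]) (by simp [hz1b, hsdef]) (fun j => by simp [hsdef])
          (fun j => by simp [hsdef])
      rwa [this] at hsub
    by_cases hgood : ∀ z ∈ I, ∀ j, z.c j = z.b * z1.c j
    · refine ⟨z1.c, le_antisymm ?_ ?_⟩
      · intro z hz
        rw [Ideal.mem_span_singleton]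
        refine ⟨⟨z.b, 0, z.d, fun _ => 0⟩, ?_⟩
        exact Mo.ext' (by simp [ha z hz]) (by simp) (fun j => by simp [hgood z hz j])
          (fun j => by simp)
      · rw [Ideal.span_le, Set.singleton_subset_iff]
        exact hsI
    · -- bad subcase: I also contains a nonzero pure-y element; contradiction
      exfalso
      push_neg at hgood
      obtain ⟨u, huI, j', hj'⟩ := hgood
      have hv : (⟨0, 0, fun j => u.c j - u.b * z1.c j, fun _ => 0⟩ : Mo k i) ∈ I := by
        have h1 : (⟨u.b, 0, fun _ => 0, fun _ => 0⟩ : Mo k i) * s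
            = ⟨0, u.b, fun j => u.b * z1.c j, fun _ => 0⟩ :=
          Mo.ext' (by simp [hsdef]) (by simp [hsdef]) (fun j => by simp [hsdef]) (fun j => by simp [hsdef])
        have h2 := I.sub_mem (I.sub_mem huI (h1 ▸ I.mul_mem_left _ hsI)) (hW u.d)
        have h3 : u - ⟨0, u.b, fun j => u.b * z1.c j, fun _ => 0⟩
            - ⟨0, 0, fun _ => 0, u.d⟩
            = ⟨0, 0, fun j => u.c j - u.b * z1.c j, fun _ => 0⟩ := by
          rw [sub_eq_add_neg, sub_eq_add_neg]
          exact Mo.ext' (by simp [ha u huI]) (by simp)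
            (fun j => by simp [sub_eq_add_neg]) (fun j => by simp)
        rwa [h3] at h2
      have hc2 : u.c j' - u.b * z1.c j' ≠ 0 := sub_ne_zero.2 hj'
      have hJ : ∀ g ∈ I.annihilator, g.a = 0 ∧ g.b = 0 ∧ ∀ j, g.c j = 0 := by
        intro g hg
        rw [mem_ann] at hg
        have hgs := hg s hsI
        have hgv := hg _ hv
        have ha' : g.a = 0 := by
          have := congrArg Mo.b hgs
          simpa [hsdef] using this
        have hb' : g.b = 0 := by
          have := congrArg (fun z => Mo.d z j') hgv
          simp only [Mo.mul_d, Mo.zero_d] at this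
          rw [ha'] at this
          simpa [hc2] using this
        refine ⟨ha', hb', fun j => ?_⟩
        have := congrArg (fun z => Mo.d z j) hgs
        simp only [Mo.mul_d, Mo.zero_d, hsdef] at this
        rw [ha', hb'] at this
        simpa using this
      have hw : (⟨0, 0, fun _ => 0, Pi.single ⟨0, by omega⟩ 1⟩ : Mo k i)
          ∈ I.annihilator := by
        rw [mem_ann]
        intro w hw
        exact Mo.ext' (by simp) (by simp [ha w hw]) (fun j => by simp [ha w hw])
          (fun j => by simp [ha w hw])
      exact no_H2_d h1i I hJ hw H2
  · -- Case A : every element of I has zero x-coefficient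
    exfalso
    push_neg at hB
    obtain ⟨u, huI, hu0⟩ := (Submodule.ne_bot_iff I).1 hI0
    have hub : u.b = 0 := hB u huI
    have hua : u.a = 0 := ha u huI
    have hJa : ∀ g ∈ I.annihilator, g.a = 0 := by
      intro g hg
      rw [mem_ann] at hg
      by_cases hc : ∀ j, u.c j = 0
      · have hd : ∃ j, u.d j ≠ 0 := by
          by_contra hd
          push_neg at hd
          exact hu0 (Mo.ext' hua hub hc hd)
        obtain ⟨j', hj'⟩ := hd
        have := congrArg (fun z => Mo.d z j') (hg u huI)
        simp only [Mo.mul_d, Mo.zero_d] at this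
        rw [hua, hub, hc j'] at this
        simp only [mul_zero, zero_mul, add_zero, zero_add] at this
        exact (mul_eq_zero.1 this).resolve_right hj'
      · push_neg at hc
        obtain ⟨j', hj'⟩ := hc
        have := congrArg (fun z => Mo.c z j') (hg u huI)
        simp only [Mo.mul_c, Mo.zero_c] at this
        rw [hua] at this
        simp only [zero_mul, add_zero, mul_zero] at this
        exact (mul_eq_zero.1 this).resolve_right hj'
    have hy : (⟨0, 0, Pi.single ⟨0, by omega⟩ 1, fun _ => 0⟩ : Mo k i)
        ∈ I.annihilator := by
      rw [mem_ann]
      intro w hwI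
      exact Mo.ext' (by simp) (by simp [ha w hwI]) (fun j => by simp [ha w hwI])
        (fun j => by simp [ha w hwI, hB w hwI])
    exact no_H2_c h1i I hJa hy H2

end Mo

namespace Mo

variable {k : Type} [Field k] {i : ℕ}

lemma not_isUnit_gen (b : Fin i → k) : ¬ IsUnit (⟨0, 1, b, fun _ => 0⟩ : Mo k i) := by
  intro h
  obtain ⟨w, hw⟩ := h.exists_right_inv
  have := congrArg Mo.a hw
  simp at this

/-- annihilator of `x + Σ b_j y_j` is the principal ideal on `x + Σ c_j y_j`
whenever `b + c = 0`. -/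
lemma ann_span (b c : Fin i → k) (hbc : ∀ j, b j + c j = 0) :
    {z : Mo k i | z * ⟨0, 1, b, fun _ => 0⟩ = 0}
      = ↑(Ideal.span {(⟨0, 1, c, fun _ => 0⟩ : Mo k i)}) := by
  ext z
  simp only [Set.mem_setOf_eq, SetLike.mem_coe, Ideal.mem_span_singleton]
  constructor
  · intro h
    have hb := congrArg Mo.b h
    simp only [Mo.mul_b, Mo.zero_b] at hb
    have hza : z.a = 0 := by simpa using hb
    have hd := fun j => congrArg (fun w => Mo.d w j) h
    simp only [Mo.mul_d, Mo.zero_d] at hd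
    refine ⟨⟨z.b, 0, z.d, fun _ => 0⟩, ?_⟩
    apply Mo.ext' (by simp [hza]) (by simp) (fun j => ?_) (fun j => by simp)
    have hdj := hd j
    simp only [hza, zero_mul, mul_zero, add_zero, zero_add] at hdj
    -- hdj : z.b * b j + z.c j = 0
    simp only [Mo.mul_c, Mo.one_c, Mo.mul_a]
    have : z.c j = z.b * c j := by
      have h2 : z.b * (b j + c j) = 0 := by rw [hbc j, mul_zero]
      rw [mul_add] at h2
      linear_combination hdj - h2
    simp [this]
  · rintro ⟨m, rfl⟩
    apply Mo.ext' (by simp) (by simp) (fun j => by simp) (fun j => ?_)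
    simp only [Mo.mul_d, Mo.mul_c, Mo.mul_b, Mo.mul_a, Mo.zero_d, Mo.one_d,
      Mo.one_c, Mo.one_b, Mo.one_a]
    linear_combination m.a * (hbc j)

end Mo

section Transfer

variable {A B : Type} [CommRing A] [CommRing B]

lemma span_transfer (e : A ≃+* B) (s r : A) :
    r ∈ Ideal.span {s} ↔ e r ∈ Ideal.span {e s} := by
  simp only [Ideal.mem_span_singleton]
  constructor
  · rintro ⟨c, rfl⟩; exact ⟨e c, by rw [map_mul]⟩
  · rintro ⟨c, hc⟩
    refine ⟨e.symm c, ?_⟩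
    have := congrArg e.symm hc
    rwa [map_mul, e.symm_apply_apply, e.symm_apply_apply] at this

lemma mem_ann_iff (I : Ideal A) (g : A) :
    g ∈ I.annihilator ↔ ∀ u ∈ I, g * u = 0 := by
  rw [Submodule.mem_annihilator]
  constructor
  · intro h u hu; have := h u hu; rwa [smul_eq_mul] at this
  · intro h u hu; rw [smul_eq_mul]; exact h u hu

lemma ann_transfer (e : A ≃+* B) (I : Ideal A) (IM : Ideal B)
    (hm : ∀ z, z ∈ IM ↔ e.symm z ∈ I) :
    (∀ g : A, g ∈ I.annihilator → e g ∈ IM.annihilator) ∧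
      (∀ g : B, g ∈ IM.annihilator → e.symm g ∈ I.annihilator) := by
  have hmem' : ∀ z : A, z ∈ I ↔ e z ∈ IM := fun z => by rw [hm, e.symm_apply_apply]
  constructor
  · intro g hg
    rw [mem_ann_iff] at hg ⊢
    intro u hu
    have h2 := hg (e.symm u) ((hm u).1 hu)
    have h3 := congrArg e h2
    simpa only [map_mul, e.apply_symm_apply, map_zero] using h3
  · intro g hg
    rw [mem_ann_iff] at hg ⊢
    intro u hu
    have h2 := hg (e u) ((hmem' u).1 hu)
    have h3 := congrArg e.symm h2
    simpa only [map_mul, e.symm_apply_apply, map_zero] using h3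

lemma H2_transfer (e : A ≃+* B) (I : Ideal A) (IM : Ideal B)
    (hm : ∀ z, z ∈ IM ↔ e.symm z ∈ I)
    (H2 : ∀ G : I.annihilator →ₗ[A] A,
      ∃ t, ∀ g (hg : g ∈ I.annihilator), G ⟨g, hg⟩ = t * g)
    (F : IM.annihilator →ₗ[B] B) :
    ∃ t, ∀ g (hg : g ∈ IM.annihilator), F ⟨g, hg⟩ = t * g := by
  obtain ⟨hann, hann'⟩ := ann_transfer e I IM hm
  set G : I.annihilator →ₗ[A] A :=
    { toFun := fun g => e.symm (F ⟨e g.val, hann g.val g.2⟩)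
      map_add' := fun g h => by
        have harg : (⟨e (g + h).val, hann _ (g + h).2⟩ : IM.annihilator)
            = ⟨e g.val, hann _ g.2⟩ + ⟨e h.val, hann _ h.2⟩ := by
          apply Subtype.ext
          show e ((g + h : I.annihilator) : A) = e (g : A) + e (h : A)
          rw [show ((g + h : I.annihilator) : A) = (g : A) + (h : A) from rfl,
            map_add]
        show e.symm (F ⟨e (g + h).val, hann _ (g + h).2⟩)
            = e.symm (F ⟨e g.val, hann _ g.2⟩) + e.symm (F ⟨e h.val, hann _ h.2⟩)
        rw [harg, map_add, map_add]
      map_smul' := fun m g => by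
        have harg : (⟨e (m • g).val, hann _ (m • g).2⟩ : IM.annihilator)
            = e m • ⟨e g.val, hann _ g.2⟩ := by
          apply Subtype.ext
          show e ((m • g : I.annihilator) : A) = e m * e (g : A)
          rw [show ((m • g : I.annihilator) : A) = m * (g : A) from rfl, map_mul]
        show e.symm (F ⟨e (m • g).val, hann _ (m • g).2⟩)
            = (RingHom.id A) m • e.symm (F ⟨e g.val, hann _ g.2⟩)
        rw [harg, map_smul, RingHom.id_apply, smul_eq_mul, smul_eq_mul, map_mul,
          e.symm_apply_apply] } with hG
  obtain ⟨t, ht⟩ := H2 G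
  refine ⟨e t, fun g hg => ?_⟩
  have h1 := ht (e.symm g) (hann' g hg)
  have hGdef : ∀ x : I.annihilator, G x = e.symm (F ⟨e x.val, hann _ x.2⟩) :=
    fun _ => rfl
  rw [hGdef] at h1
  have harg : (⟨e ((⟨e.symm g, hann' g hg⟩ : I.annihilator) : A),
      hann _ (⟨e.symm g, hann' g hg⟩ : I.annihilator).2⟩ : IM.annihilator)
      = ⟨g, hg⟩ := Subtype.ext (e.apply_symm_apply g)
  rw [harg] at h1
  have h4 := congrArg e h1
  simpa only [e.apply_symm_apply, map_mul] using h4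

end Transfer

namespace Bridge
variable (k : Type) [Field k] (i : ℕ)

lemma phiBar_gen (b : Fin i → k) :
    phiBar k i (xS k i + ∑ j, algebraMap k (Sring k i) (b j) * yS k i j)
      = (⟨0, 1, b, fun _ => 0⟩ : Mo k i) := by
  rw [map_add, map_sum, phiBar_x]
  have : ∀ j, phiBar k i (algebraMap k (Sring k i) (b j) * yS k i j)
      = algebraMap k (Mo k i) (b j) * ⟨0, 0, Pi.single j 1, fun _ => 0⟩ := by
    intro j
    rw [map_mul, phiBar_K, phiBar_y]
  rw [Finset.sum_congr rfl (fun j _ => this j)]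
  apply Mo.ext'
  · simp
  · simp
  · intro l
    simp [Pi.single_apply, Finset.sum_ite_eq' Finset.univ l]
  · intro l
    simp

end Bridge

theorem stmt19' (k : Type) [Field k] (i : ℕ) (hi : 2 ≤ i)
    (T : Type) [AddCommGroup T] [Module (Sring k i) T]
    (hcyc : ∃ t : T, Submodule.span (Sring k i) {t} = ⊤)
    (hbid : Function.Bijective (Module.Dual.eval (Sring k i) T))
    (hne : Nontrivial T)
    (hnf : ¬ Module.Free (Sring k i) T) :
    ∃ b : Fin i → k,
      (¬ IsUnit (xS k i + ∑ j, algebraMap k (Sring k i) (b j) * yS k i j) ∧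
        ∃ t : Sring k i,
          {r : Sring k i |
              r * (xS k i + ∑ j, algebraMap k (Sring k i) (b j) * yS k i j) = 0} =
            ↑(Ideal.span {t}) ∧
          {r : Sring k i | r * t = 0} =
            ↑(Ideal.span {xS k i + ∑ j, algebraMap k (Sring k i) (b j) * yS k i j})) ∧
      Nonempty (T ≃ₗ[Sring k i]
        (Sring k i ⧸
          Ideal.span {xS k i + ∑ j, algebraMap k (Sring k i) (b j) * yS k i j})) := by
  classical
  obtain ⟨t0, hsp⟩ := hcyc
  set R := Sring k i
  set q : R →ₗ[R] T := LinearMap.toSpanSingleton R T t0 with hq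
  have hqs : Function.Surjective q := by
    intro z
    have hz : z ∈ Submodule.span R {t0} := by rw [hsp]; trivial
    obtain ⟨r, hr⟩ := Submodule.mem_span_singleton.1 hz
    exact ⟨r, hr⟩
  set I : Ideal R := LinearMap.ker q with hI
  have gEquiv : (R ⧸ I) ≃ₗ[R] T := q.quotKerEquivOfSurjective hqs
  have hbij : Function.Bijective (Module.Dual.eval R (R ⧸ I)) :=
    bidual_transfer gEquiv hbid
  have hI0 : I ≠ ⊥ := by
    intro h
    apply hnf
    have hqi : Function.Injective q := by
      rw [← LinearMap.ker_eq_bot, ← hI, h]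
    exact Module.Free.of_equiv (LinearEquiv.ofBijective q ⟨hqi, hqs⟩)
  have hIT : I ≠ ⊤ := by
    intro h
    have h1 : (1 : R) ∈ I := by rw [h]; trivial
    have ht0 : t0 = 0 := by
      have := (LinearMap.mem_ker).1 h1
      rwa [hq, LinearMap.toSpanSingleton_apply, one_smul] at this
    obtain ⟨x, y, hxy⟩ := hne
    apply hxy
    have hx := hqs x
    have hy := hqs y
    obtain ⟨rx, hrx⟩ := hx
    obtain ⟨ry, hry⟩ := hy
    rw [← hrx, ← hry, hq, LinearMap.toSpanSingleton_apply,
      LinearMap.toSpanSingleton_apply, ht0, smul_zero, smul_zero]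
  -- now transfer to the model
  set e : Sring k i ≃+* Mo k i := Bridge.eqv k i with he
  set IM : Ideal (Mo k i) := Ideal.comap (e.symm : Mo k i →+* Sring k i) I with hIM
  have hmem : ∀ z : Mo k i, z ∈ IM ↔ e.symm z ∈ I := fun z => Iff.rfl
  have hmem' : ∀ r : R, r ∈ I ↔ e r ∈ IM := by
    intro r
    rw [hmem, e.symm_apply_apply]
  have hIM0 : IM ≠ ⊥ := by
    intro h
    apply hI0
    rw [eq_bot_iff]
    intro z hz
    have : e z ∈ IM := (hmem' z).1 hz
    rw [h] at this
    have hz0 : e z = 0 := this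
    have := congrArg e.symm hz0
    rwa [e.symm_apply_apply, map_zero] at this
  have hIMT : IM ≠ ⊤ := by
    intro h
    apply hIT
    rw [Ideal.eq_top_iff_one]
    have : (1 : Mo k i) ∈ IM := by rw [h]; trivial
    rw [hmem, map_one] at this
    exact this
  have H2M := H2_transfer e I IM hmem (H2_of_bidual I hbij)
  obtain ⟨b, hspan⟩ := Mo.classify (by omega : 1 < i) IM hIM0 hIMT H2M
  refine ⟨b, ?_, ?_⟩
  · -- exact zero divisor part
    set sR : Sring k i := xS k i + ∑ j, algebraMap k (Sring k i) (b j) * yS k i j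
      with hsR
    have hesR : e sR = (⟨0, 1, b, fun _ => 0⟩ : Mo k i) := Bridge.phiBar_gen k i b
    constructor
    · intro h
      exact Mo.not_isUnit_gen b (hesR ▸ h.map e)
    · set c : Fin i → k := fun j => -(b j) with hc
      set tR : Sring k i := xS k i + ∑ j, algebraMap k (Sring k i) (c j) * yS k i j
        with htR
      have hetR : e tR = (⟨0, 1, c, fun _ => 0⟩ : Mo k i) := Bridge.phiBar_gen k i c
      have hbc : ∀ j, b j + c j = 0 := fun j => by simp [hc]
      have hcb : ∀ j, c j + b j = 0 := fun j => by simp [hc]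
      refine ⟨tR, ?_, ?_⟩
      · ext r
        simp only [Set.mem_setOf_eq, SetLike.mem_coe]
        have h1 : r * sR = 0 ↔ e r * e sR = 0 := by
          rw [← map_mul]
          constructor
          · intro h; rw [h, map_zero]
          · intro h
            have := congrArg e.symm h
            rwa [e.symm_apply_apply, map_zero] at this
        rw [h1, hesR]
        have h2 := Set.ext_iff.1 (Mo.ann_span b c hbc) (e r)
        simp only [Set.mem_setOf_eq, SetLike.mem_coe] at h2
        rw [h2, ← hetR, ← span_transfer e tR r]
      · ext r
        simp only [Set.mem_setOf_eq, SetLike.mem_coe]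
        have h1 : r * tR = 0 ↔ e r * e tR = 0 := by
          rw [← map_mul]
          constructor
          · intro h; rw [h, map_zero]
          · intro h
            have := congrArg e.symm h
            rwa [e.symm_apply_apply, map_zero] at this
        rw [h1, hetR]
        have h2 := Set.ext_iff.1 (Mo.ann_span c b hcb) (e r)
        simp only [Set.mem_setOf_eq, SetLike.mem_coe] at h2
        rw [h2, ← hesR, ← span_transfer e sR r]
  · -- the module isomorphism
    have hIspan : I = Ideal.span
        {xS k i + ∑ j, algebraMap k (Sring k i) (b j) * yS k i j} := by
      ext z
      rw [hmem' z, hspan]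
      have h3 : e (xS k i + ∑ j, algebraMap k (Sring k i) (b j) * yS k i j)
          = (⟨0, 1, b, fun _ => 0⟩ : Mo k i) := Bridge.phiBar_gen k i b
      rw [← h3, ← span_transfer e]
    exact ⟨gEquiv.symm.trans (Submodule.quotEquivOfEq _ _ hIspan)⟩

/-- Every nonzero, non-free, cyclic totally reflexive `S_i`-module `T` is
isomorphic to `S_i/(x + Σ b_j·y_j)` for some `b₁, …, b_i ∈ k`; in particular it is the
quotient of `S_i` by a principal ideal generated by an exact zerodivisor
(the generator `s = x + Σ b_j·y_j` is a non-unit admitting `t` with `ann(s) = tS_i`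
and `ann(t) = sS_i`). -/
theorem stmt19 (k : Type) [Field k] [CharZero k] (i : ℕ) (hi : 2 ≤ i)
    (T : Type) [AddCommGroup T] [Module (Sring k i) T] [Module.Finite (Sring k i) T]
    (hcyc : ∃ t : T, Submodule.span (Sring k i) {t} = ⊤)
    (htr : IsTotallyReflexive (Sring k i) T)
    (hne : Nontrivial T)
    (hnf : ¬ Module.Free (Sring k i) T) :
    ∃ b : Fin i → k,
      (¬ IsUnit (xS k i + ∑ j, algebraMap k (Sring k i) (b j) * yS k i j) ∧
        ∃ t : Sring k i,
          {r : Sring k i |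
              r * (xS k i + ∑ j, algebraMap k (Sring k i) (b j) * yS k i j) = 0} =
            ↑(Ideal.span {t}) ∧
          {r : Sring k i | r * t = 0} =
            ↑(Ideal.span {xS k i + ∑ j, algebraMap k (Sring k i) (b j) * yS k i j})) ∧
      Nonempty (T ≃ₗ[Sring k i]
        (Sring k i ⧸
          Ideal.span {xS k i + ∑ j, algebraMap k (Sring k i) (b j) * yS k i j})) :=
  stmt19' k i hi T hcyc htr.2.2 hne hnf
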